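/- Let K be a field and A a nontrivial commutative K-algebra of finite presentation that is formally unramified over K (i.e. Ω_{A/K} = 0). Then A is finite-dimensional as a K-vector space, A is an étale K-algebra, and A is trace-étale over K (its trace form is nondegenerate). In particular, a finitely presented K-algebra is unramified over K if and only if it is étale over K. -/

import Mathlib

universe u

open Algebra

section Aux

variable {K : Type u} [Field K]

lemma trace_pi_aux {ι : Type u} [Fintype ι] (L : ι → Type u)
    [∀ i, CommRing (L i)] [∀ i, Algebra K (L i)] [∀ i, Module.Finite K (L i)]
    (x : ∀ i, L i) :
    Algebra.trace K (∀ i, L i) x = ∑ i, Algebra.trace K (L i) (x i) := by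
  classical
  let b : ∀ i, Module.Basis (Module.Free.ChooseBasisIndex K (L i)) K (L i) :=
    fun i => Module.Free.chooseBasis K (L i)
  rw [Algebra.trace_eq_matrix_trace (Pi.basis b), Matrix.trace,
    ← Finset.univ_sigma_univ, Finset.sum_sigma]
  refine Finset.sum_congr rfl fun i _ => ?_
  rw [Algebra.trace_eq_matrix_trace (b i), Matrix.trace]
  refine Finset.sum_congr rfl fun j _ => ?_
  have hmul : ∀ (v : L i), x * Pi.single i v = Pi.single i (x i * v) := by
    intro v
    funext k
    rcases eq_or_ne k i with rfl | hk
    · simp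
    · simp [Pi.single_eq_of_ne hk]
  simp only [Matrix.diag_apply, Algebra.leftMulMatrix_eq_repr_mul, Pi.basis_apply, hmul,
    Pi.basis_repr, Pi.single_eq_same]

lemma etale_aux (A : Type u) [CommRing A] [Algebra K A]
    [Algebra.FormallyUnramified K A] (hfp : Algebra.FinitePresentation K A) :
    Module.Finite K A ∧ Algebra.Etale K A ∧ (Algebra.traceForm K A).Nondegenerate := by
  classical
  haveI := hfp
  haveI : Algebra.FiniteType K A := inferInstance
  haveI : Algebra.EssFiniteType K A := inferInstance
  haveI hfin : Module.Finite K A := Algebra.FormallyUnramified.finite_of_free (R := K) (S := A)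
  haveI : IsReduced A := Algebra.FormallyUnramified.isReduced_of_field K A
  haveI : IsArtinianRing A := isArtinian_of_tower K inferInstance
  -- decompose `A` as a product of its residue fields
  let ι : Type u := {I : Ideal A // I.IsMaximal}
  haveI : Finite ι := (IsArtinianRing.setOfPred_isMaximal_finite A).to_subtype
  haveI : Fintype ι := Fintype.ofFinite ι
  haveI hmax : ∀ I : ι, I.1.IsMaximal := fun I => I.2
  letI : ∀ I : ι, Field (A ⧸ I.1) := fun I => Ideal.Quotient.field I.1
  haveI : ∀ I : ι, Module.Finite K (A ⧸ I.1) := fun I =>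
    Module.Finite.of_surjective (Ideal.Quotient.mkₐ K I.1).toLinearMap
      Ideal.Quotient.mk_surjective
  haveI : ∀ I : ι, Algebra.FormallyUnramified A (A ⧸ I.1) := fun I =>
    ⟨KaehlerDifferential.subsingleton_of_surjective A (A ⧸ I.1)
      Ideal.Quotient.mk_surjective⟩
  haveI : ∀ I : ι, Algebra.FormallyUnramified K (A ⧸ I.1) := fun I =>
    Algebra.FormallyUnramified.comp K A (A ⧸ I.1)
  haveI : ∀ I : ι, Algebra.EssFiniteType K (A ⧸ I.1) := fun I => inferInstance
  haveI : ∀ I : ι, Algebra.IsSeparable K (A ⧸ I.1) := fun I =>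
    Algebra.FormallyUnramified.isSeparable K (A ⧸ I.1)
  haveI : ∀ I : ι, Algebra.FormallyEtale K (A ⧸ I.1) := fun I =>
    Algebra.FormallyEtale.of_isSeparable K (A ⧸ I.1)
  haveI : Algebra.FormallyEtale K (∀ I : ι, A ⧸ I.1) :=
    Algebra.FormallyEtale.iff_formallyUnramified_and_formallySmooth.mpr ⟨
      ( (Algebra.FormallyUnramified.pi_iff _).mpr fun I => inferInstance),
      ((Algebra.FormallySmooth.pi_iff _).mpr fun I => inferInstance)⟩
  -- the comparison map
  let f : A →ₐ[K] ∀ I : ι, A ⧸ I.1 := Pi.algHom _ _ fun I => Ideal.Quotient.mkₐ K I.1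
  have hcop : Pairwise fun I J : ι => IsCoprime I.1 J.1 := by
    intro I J hIJ
    rw [Ideal.isCoprime_iff_sup_eq]
    exact I.2.coprime_of_ne J.2 (fun hh => hIJ (Subtype.ext hh))
  have hinj : Function.Injective f := by
    rw [injective_iff_map_eq_zero]
    intro a ha
    have hmem : a ∈ Ideal.jacobson (⊥ : Ideal A) := by
      rw [Ideal.jacobson, Ideal.mem_sInf]
      rintro J ⟨-, hJ⟩
      exact Ideal.Quotient.eq_zero_iff_mem.mp (congr_fun ha ⟨J, hJ⟩)
    obtain ⟨n, hn⟩ := IsArtinianRing.isNilpotent_jacobson_bot (R := A)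
    have : a ^ n = 0 := by
      simpa [hn] using Ideal.pow_mem_pow hmem n
    exact IsReduced.eq_zero a ⟨n, this⟩
  have hsurj : Function.Surjective f := by
    intro y
    obtain ⟨r, hr⟩ := Ideal.pi_quotient_surjective hcop y
    exact ⟨r, funext fun I => hr I⟩
  let e : A ≃ₐ[K] ∀ I : ι, A ⧸ I.1 := AlgEquiv.ofBijective f ⟨hinj, hsurj⟩
  haveI : Algebra.FormallyEtale K A :=
    (Algebra.FormallyEtale.iff_of_equiv e).mpr inferInstance
  refine ⟨hfin, ⟨inferInstance, hfp⟩, ?_⟩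
  refine LinearMap.BilinForm.Nondegenerate.ofSeparatingLeft ?_
  intro x hx
  have hx' : ∀ z : ∀ I : ι, A ⧸ I.1, Algebra.trace K (∀ I : ι, A ⧸ I.1) (e x * z) = 0 := by
    intro z
    obtain ⟨y, rfl⟩ := e.surjective z
    rw [← map_mul, Algebra.trace_eq_of_algEquiv]
    exact hx y
  have hzero : ∀ I : ι, e x I = 0 := by
    intro I
    refine (traceForm_nondegenerate K (A ⧸ I.1)).1 (e x I) fun v => ?_
    classical
    let z : ∀ J : ι, A ⧸ J.1 := Pi.single I v
    have := hx' z
    rw [trace_pi_aux] at this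
    have hcollapse : ∀ J : ι, Algebra.trace K (A ⧸ J.1) ((e x * z) J)
        = if J = I then Algebra.trace K (A ⧸ I.1) (e x I * v) else 0 := by
      intro J
      rcases eq_or_ne J I with rfl | hJ
      · simp [z]
      · simp [z, Pi.single_eq_of_ne hJ, hJ]
    rw [Finset.sum_congr rfl fun J _ => hcollapse J, Finset.sum_ite_eq'] at this
    simpa using this
  have : e x = 0 := funext hzero
  exact e.injective (by simpa using this)

end Aux

/-- A nontrivial finitely presented commutative algebra `A` over a field `K` with
`Ω_{A/K} = 0` is finite-dimensional as a `K`-vector space, étale over `K`, and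
trace-étale (nondegenerate trace form). In particular, a finitely presented
`K`-algebra is (formally) unramified over `K` iff it is étale over `K`. -/
theorem stmt17 {K A : Type u} [Field K] [CommRing A] [Nontrivial A] [Algebra K A]
    (hfp : Algebra.FinitePresentation K A)
    (h : Subsingleton (KaehlerDifferential K A)) :
    FiniteDimensional K A ∧ Algebra.Etale K A ∧
      (Algebra.traceForm K A).Nondegenerate ∧
      ∀ (B : Type u) [CommRing B] [Algebra K B], Algebra.FinitePresentation K B →
        (Algebra.FormallyUnramified K B ↔ Algebra.Etale K B) := by
  haveI : Algebra.FormallyUnramified K A := ⟨h⟩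
  obtain ⟨h1, h2, h3⟩ := etale_aux A hfp
  refine ⟨h1, h2, h3, fun B _ _ hB => ?_⟩
  constructor
  · intro hu
    exact (etale_aux B hB).2.1
  · intro hE
    haveI := hE.formallyEtale
    infer_instance
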